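/- Let n ≥ 3, q ≥ 1, and 1 ≤ d ≤ n. Suppose X ⊆ [q]^n is such that every two (not necessarily distinct) elements x, x' ∈ X agree in at least d coordinates, and suppose q > (e·n/d)². Then |X| < q^{n - d/4}. -/

import Mathlib

open Finset in
lemma stmt11_count (n q d : ℕ) (hq : 1 ≤ q) (hdn : d ≤ n)
    (X : Finset (Fin n → Fin q))
    (hagree : ∀ x ∈ X, ∀ x' ∈ X,
      d ≤ (Finset.univ.filter fun i : Fin n => x i = x' i).card) :
    X.card ≤ n.choose d * q ^ (n - d) := by
  rcases X.eq_empty_or_nonempty with h | ⟨x₀, hx₀⟩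
  · simp [h]
  · classical
    set z0 : Fin q := ⟨0, hq⟩ with hz0
    have hP : ∀ x : Fin n → Fin q, ∃ P : Finset (Fin n), x ∈ X →
        P ⊆ Finset.univ.filter (fun i => x i = x₀ i) ∧ P.card = d := by
      intro x
      by_cases hx : x ∈ X
      · obtain ⟨P, hsub, hcard⟩ :=
          Finset.exists_subset_card_eq (hagree x hx x₀ hx₀)
        exact ⟨P, fun _ => ⟨hsub, hcard⟩⟩
      · exact ⟨∅, fun h => absurd h hx⟩
    choose P hPspec using hP
    set T : Finset (Σ _ : Finset (Fin n), Fin n → Fin q) :=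
      (Finset.powersetCard d (Finset.univ : Finset (Fin n))).sigma
        (fun S => Fintype.piFinset (fun i => if i ∈ S then ({z0} : Finset (Fin q)) else univ))
      with hT
    have hcardle : X.card ≤ T.card := by
      apply Finset.card_le_card_of_injOn
        (fun x => ⟨P x, fun i => if i ∈ P x then z0 else x i⟩)
      · intro x hx
        obtain ⟨hsub, hcard⟩ := hPspec x hx
        rw [hT, Finset.mem_coe, Finset.mem_sigma]
        constructor
        · exact Finset.mem_powersetCard.2 ⟨Finset.subset_univ _, hcard⟩
        · rw [Fintype.mem_piFinset]
          intro i
          by_cases hi : i ∈ P x <;> simp [hi]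
      · intro x hx y hy heq
        obtain ⟨hsubx, _⟩ := hPspec x hx
        obtain ⟨hsuby, _⟩ := hPspec y hy
        have h1 : P x = P y := congrArg Sigma.fst heq
        have h2 : (fun i => if i ∈ P x then z0 else x i)
            = (fun i => if i ∈ P y then z0 else y i) := by
          have := Sigma.mk.inj_iff.1 heq
          exact eq_of_heq this.2
        funext i
        by_cases hi : i ∈ P x
        · have hxi : x i = x₀ i := (Finset.mem_filter.1 (hsubx hi)).2
          have hyi : y i = x₀ i := (Finset.mem_filter.1 (hsuby (h1 ▸ hi))).2
          rw [hxi, hyi]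
        · have := congrFun h2 i
          rw [if_neg hi, if_neg (h1 ▸ hi)] at this
          exact this
    have hTcard : T.card = n.choose d * q ^ (n - d) := by
      rw [hT, Finset.card_sigma]
      have hsum : ∀ S ∈ Finset.powersetCard d (Finset.univ : Finset (Fin n)),
          (Fintype.piFinset (fun i => if i ∈ S then ({z0} : Finset (Fin q)) else univ)).card
            = q ^ (n - d) := by
        intro S hS
        obtain ⟨-, hScard⟩ := Finset.mem_powersetCard.1 hS
        rw [Fintype.card_piFinset]
        have : ∀ i : Fin n, (if i ∈ S then ({z0} : Finset (Fin q)) else univ).card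
            = if i ∈ S then 1 else q := by
          intro i; by_cases hi : i ∈ S <;> simp [hi]
        rw [Finset.prod_congr rfl (fun i _ => this i), Finset.prod_ite]
        simp only [Finset.prod_const_one, one_mul, Finset.prod_const]
        congr 1
        have : Finset.univ.filter (fun i : Fin n => ¬ i ∈ S) = Sᶜ := by
          ext i; simp
        rw [this, Finset.card_compl, hScard, Fintype.card_fin]
      rw [Finset.sum_congr rfl hsum, Finset.sum_const, smul_eq_mul,
        Finset.card_powersetCard, Finset.card_univ, Fintype.card_fin]
    omega

lemma stmt11_choose (n d : ℕ) (hd : 1 ≤ d) :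
    (n.choose d : ℝ) ≤ (Real.exp 1 * n / d) ^ d := by
  have hd0 : (0:ℝ) < d := by exact_mod_cast hd
  have hfac : (0:ℝ) < (d.factorial : ℝ) := by exact_mod_cast d.factorial_pos
  have h1 : (n.choose d : ℝ) ≤ (n:ℝ) ^ d / d.factorial := by
    exact_mod_cast Nat.choose_le_pow_div d n
  have h2 : (d:ℝ) ^ d / d.factorial ≤ Real.exp d := by
    calc (d:ℝ) ^ d / d.factorial
        ≤ ∑ i ∈ Finset.range (d+1), (d:ℝ) ^ i / i.factorial := by
          exact Finset.single_le_sum (f := fun i => (d:ℝ) ^ i / (i.factorial : ℝ))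
            (fun i _ => by positivity) (Finset.self_mem_range_succ d)
      _ ≤ Real.exp d := Real.sum_le_exp_of_nonneg (by positivity) _
  have h2' : (d:ℝ) ^ d ≤ Real.exp d * d.factorial := by
    rw [div_le_iff₀ hfac] at h2; linarith
  calc (n.choose d : ℝ) ≤ (n:ℝ) ^ d / d.factorial := h1
    _ ≤ Real.exp d * (n:ℝ) ^ d / (d:ℝ) ^ d := by
        rw [div_le_div_iff₀ hfac (by positivity)]
        have hn0 : (0:ℝ) ≤ (n:ℝ) ^ d := by positivity
        nlinarith
    _ = (Real.exp 1 * n / d) ^ d := by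
        rw [div_pow, mul_pow, Real.exp_one_pow]

theorem stmt11 (n q d : ℕ) (hn : 3 ≤ n) (hq : 1 ≤ q) (hd1 : 1 ≤ d) (hdn : d ≤ n)
    (X : Finset (Fin n → Fin q))
    (hagree : ∀ x ∈ X, ∀ x' ∈ X,
      d ≤ (Finset.univ.filter fun i : Fin n => x i = x' i).card)
    (hq2 : (Real.exp 1 * (n : ℝ) / (d : ℝ)) ^ 2 < (q : ℝ)) :
    (X.card : ℝ) < (q : ℝ) ^ ((n : ℝ) - (d : ℝ) / 4) := by
  have hd0 : (0:ℝ) < d := by exact_mod_cast hd1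
  have hnd : (d:ℝ) ≤ n := by exact_mod_cast hdn
  set A : ℝ := Real.exp 1 * n / d with hA
  have hA1 : (1:ℝ) ≤ A := by
    rw [hA, le_div_iff₀ hd0, one_mul]
    have he : (1:ℝ) ≤ Real.exp 1 := Real.one_le_exp (by norm_num)
    nlinarith
  have hq1 : (1:ℝ) < q := lt_of_le_of_lt (by nlinarith) hq2
  have hq0 : (0:ℝ) < q := by linarith
  -- combinatorial bound
  have hcount := stmt11_count n q d hq hdn X hagree
  have hcountR : (X.card : ℝ) ≤ (n.choose d : ℝ) * (q:ℝ) ^ (n - d : ℕ) := by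
    exact_mod_cast hcount
  have hchoose := stmt11_choose n d hd1
  have hApos : (0:ℝ) < A := by linarith
  -- A^d < q^(d/2)
  have hAd : A ^ d < (q:ℝ) ^ ((d:ℝ)/2) := by
    have key : A ^ d = ((A^2) : ℝ) ^ ((d:ℝ)/2) := by
      calc A ^ d = A ^ ((d:ℝ)) := (Real.rpow_natCast A d).symm
        _ = A ^ ((2:ℝ) * ((d:ℝ)/2)) := by ring_nf
        _ = (A ^ (2:ℝ)) ^ ((d:ℝ)/2) := Real.rpow_mul hApos.le 2 ((d:ℝ)/2)
        _ = ((A^2) : ℝ) ^ ((d:ℝ)/2) := by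
            congr 1
            rw [← Real.rpow_natCast A 2]
            norm_num
    rw [key]
    apply Real.rpow_lt_rpow (by positivity) hq2 (by positivity)
  -- q^(n-d) as rpow
  have hqnd : ((q:ℝ) ^ (n - d : ℕ)) = (q:ℝ) ^ ((n:ℝ) - d) := by
    rw [← Real.rpow_natCast (q:ℝ) (n - d)]
    congr 1
    push_cast [Nat.cast_sub hdn]
    ring
  have hpow_pos : (0:ℝ) < (q:ℝ) ^ ((n:ℝ) - d) := Real.rpow_pos_of_pos hq0 _
  calc (X.card : ℝ) ≤ (n.choose d : ℝ) * (q:ℝ) ^ (n - d : ℕ) := hcountR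
    _ ≤ A ^ d * (q:ℝ) ^ ((n:ℝ) - d) := by
        rw [hqnd] at hcountR ⊢
        exact mul_le_mul_of_nonneg_right hchoose hpow_pos.le
    _ < (q:ℝ) ^ ((d:ℝ)/2) * (q:ℝ) ^ ((n:ℝ) - d) :=
        mul_lt_mul_of_pos_right hAd hpow_pos
    _ = (q:ℝ) ^ ((n:ℝ) - d/2) := by
        rw [← Real.rpow_add hq0]; ring_nf
    _ ≤ (q:ℝ) ^ ((n:ℝ) - d/4) :=
        Real.rpow_le_rpow_of_exponent_le hq1.le (by linarith)
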